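/- For all nonnegative integers a ≥ b, the Stirling-Carlitz number of the first kind satisfies S1_C(r^a, r^b) = (D_a/D_b) · (−1)^{a−b} / L_{a−b}^{r^b}. -/

import Mathlib

open scoped Classical
open PowerSeries Finset

noncomputable section

variable (F : Type) [Field F] [Fintype F]

/-- The rational function field `K = 𝔽_r(T)`. -/
abbrev K : Type := RatFunc F

/-- `r`, the cardinality of the finite field of constants. -/
def rr : ℕ := Fintype.card F

/-- The variable `T` of the rational function field. -/
def Tv : K F := RatFunc.X

/-- `[i] = T^{r^i} - T`. -/
def br (i : ℕ) : K F := Tv F ^ (rr F) ^ i - Tv F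

/-- `D_0 = 1`, `D_i = [i] · D_{i-1}^r`. -/
def D : ℕ → K F
  | 0 => 1
  | i + 1 => br F (i + 1) * D i ^ rr F

/-- `L_0 = 1`, `L_i = [i] · L_{i-1}`. -/
def L : ℕ → K F
  | 0 => 1
  | i + 1 => br F (i + 1) * L i

/-- The Carlitz factorial `Π(n) = ∏_j D_j^{c_j}`, where `c_j = n / r^j % r` are the
base-`r` digits of `n` (all digits with index `> n` vanish since `r ≥ 2`). -/
def Cf (n : ℕ) : K F := ∏ j ∈ Finset.range (n + 1), D F j ^ (n / (rr F) ^ j % rr F)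

/-- The Carlitz logarithm `log_C(z) = Σ_{i ≥ 0} (-1)^i z^{r^i} / L_i`: the coefficient of
`z^m` is `(-1)^i / L_i` if `m = r^i` and `0` otherwise (note `i ≤ r^i = m` since `r ≥ 2`). -/
def logC : PowerSeries (K F) :=
  PowerSeries.mk fun m =>
    ∑ i ∈ Finset.range (m + 1), if m = (rr F) ^ i then (-1 : K F) ^ i / L F i else 0

/-- The Carlitz exponential `e_C(z) = Σ_{i ≥ 0} z^{r^i} / D_i`. -/
def eC : PowerSeries (K F) :=
  PowerSeries.mk fun m =>
    ∑ i ∈ Finset.range (m + 1), if m = (rr F) ^ i then 1 / D F i else 0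

/-- The power series `log_C(z)/z`. -/
def logCdivZ : PowerSeries (K F) :=
  PowerSeries.mk fun n => PowerSeries.coeff (n + 1) (logC F)

/-- The power series `e_C(z)/z`. -/
def eCdivZ : PowerSeries (K F) :=
  PowerSeries.mk fun n => PowerSeries.coeff (n + 1) (eC F)

-- ### Auxiliary lemmas ###

lemma coeff_pow_char' {R : Type*} [CommRing R] (p : ℕ) [Fact p.Prime] [CharP R p]
    (f : PowerSeries R) (m : ℕ) :
    PowerSeries.coeff m (f ^ p) =
      if p ∣ m then (PowerSeries.coeff (m / p) f) ^ p else 0 := by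
  have hp : 0 < p := (Fact.out : p.Prime).pos
  have key : PowerSeries.coeff m (f ^ p) = ((PowerSeries.trunc (m + 1) f) ^ p).coeff m := by
    calc PowerSeries.coeff m (f ^ p)
        = PowerSeries.coeff m ((PowerSeries.trunc (m + 1) (f ^ p) : Polynomial R) : R⟦X⟧) :=
          (PowerSeries.coeff_coe_trunc_of_lt m.lt_succ_self).symm
      _ = PowerSeries.coeff m
            (((PowerSeries.trunc (m + 1)
              ((PowerSeries.trunc (m + 1) f : R⟦X⟧) ^ p) : Polynomial R)) : R⟦X⟧) := by
          rw [PowerSeries.trunc_trunc_pow]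
      _ = PowerSeries.coeff m ((PowerSeries.trunc (m + 1) f : R⟦X⟧) ^ p) :=
          PowerSeries.coeff_coe_trunc_of_lt m.lt_succ_self
      _ = ((PowerSeries.trunc (m + 1) f) ^ p).coeff m := by
          rw [← Polynomial.coe_pow, Polynomial.coeff_coe]
  rw [key, ← Polynomial.map_frobenius_expand p, Polynomial.coeff_map, Polynomial.coeff_expand hp,
    frobenius_def]
  split_ifs with hdvd
  · congr 1
    rw [PowerSeries.coeff_trunc, if_pos (Nat.lt_succ_of_le (Nat.div_le_self m p))]
  · exact zero_pow hp.ne'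

lemma coeff_pow_char_pow' {R : Type*} [CommRing R] (p : ℕ) [Fact p.Prime] [CharP R p]
    (f : PowerSeries R) (k m : ℕ) (h : p ^ k ∣ m) :
    PowerSeries.coeff m (f ^ p ^ k) = (PowerSeries.coeff (m / p ^ k) f) ^ p ^ k := by
  induction k generalizing m with
  | zero => simp
  | succ k ih =>
    have hp : 0 < p := (Fact.out : p.Prime).pos
    obtain ⟨c, rfl⟩ := h
    have hpm : p ∣ p ^ (k + 1) * c := (dvd_pow_self p k.succ_ne_zero).mul_right c
    have hm : p ^ (k + 1) * c / p = p ^ k * c := by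
      rw [pow_succ, mul_comm (p ^ k) p, mul_assoc, Nat.mul_div_cancel_left _ hp]
    have hstep : f ^ p ^ (k + 1) = (f ^ p ^ k) ^ p := by
      rw [← pow_mul, ← pow_succ]
    rw [hstep, coeff_pow_char', if_pos hpm, hm, ih _ (dvd_mul_right _ _),
      Nat.mul_div_cancel_left c (pow_pos hp k),
      Nat.mul_div_cancel_left c (pow_pos hp (k + 1)), ← pow_mul, ← pow_succ]

lemma br_ne_zero (i : ℕ) (hi : i ≠ 0) : br F i ≠ 0 := by
  have hr2 : 2 ≤ rr F := Fintype.one_lt_card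
  have hm : 2 ≤ rr F ^ i := le_trans hr2 (Nat.le_self_pow hi _)
  have heq : br F i = algebraMap (Polynomial F) (RatFunc F)
      (Polynomial.X ^ (rr F ^ i) - Polynomial.X) := by
    rw [br, Tv, map_sub, map_pow, RatFunc.algebraMap_X]
  rw [heq]
  apply RatFunc.algebraMap_ne_zero
  intro hzero
  have h1 := congrArg (fun q => Polynomial.coeff q (rr F ^ i)) hzero
  simp only [Polynomial.coeff_sub, Polynomial.coeff_X_pow, if_pos rfl,
    Polynomial.coeff_X_of_ne_one (by omega : rr F ^ i ≠ 1), Polynomial.coeff_zero] at h1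
  norm_num at h1

lemma D_ne_zero (i : ℕ) : D F i ≠ 0 := by
  induction i with
  | zero => exact one_ne_zero
  | succ n ih =>
    show br F (n + 1) * D F n ^ rr F ≠ 0
    exact mul_ne_zero (br_ne_zero F (n + 1) n.succ_ne_zero) (pow_ne_zero _ ih)

lemma Cf_rpow (a : ℕ) : Cf F (rr F ^ a) = D F a := by
  have hr2 : 2 ≤ rr F := Fintype.one_lt_card
  rw [Cf, Finset.prod_eq_single a]
  · rw [Nat.div_self (pow_pos (by omega) a), Nat.mod_eq_of_lt (by omega), pow_one]
  · intro j _ hj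
    rcases lt_or_gt_of_ne hj with hj | hj
    · obtain ⟨c, hc⟩ := dvd_pow_self (rr F) (Nat.sub_ne_zero_of_lt hj)
      rw [Nat.pow_div hj.le (by omega), hc, Nat.mul_mod_right, pow_zero]
    · rw [Nat.div_eq_of_lt (Nat.pow_lt_pow_right (by omega) hj), Nat.zero_mod, pow_zero]
  · intro h
    exact absurd (Finset.mem_range.mpr (Nat.lt_succ_of_lt (Nat.lt_pow_self (n := a) (by omega)))) h

lemma coeff_logC (j : ℕ) :
    PowerSeries.coeff (rr F ^ j) (logC F) = (-1 : K F) ^ j / L F j := by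
  have hr2 : 2 ≤ rr F := Fintype.one_lt_card
  rw [logC, PowerSeries.coeff_mk, Finset.sum_eq_single j]
  · rw [if_pos rfl]
  · intro i _ hij
    rw [if_neg fun h => hij (Nat.pow_right_injective hr2 h.symm)]
  · intro h
    exact absurd (Finset.mem_range.mpr (Nat.lt_succ_of_lt (Nat.lt_pow_self (n := j) (by omega)))) h

/-- For `a ≥ b`, `S1_C(r^a, r^b) = (D_a / D_b) · (-1)^{a-b} / L_{a-b}^{r^b}`. -/
theorem stirlingCarlitzFirst_pow_pow
    (S1C : ℕ → ℕ → K F)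
    (hS1C : ∀ n k : ℕ,
      PowerSeries.coeff n (logC F ^ k) / Cf F k = S1C n k / Cf F n)
    (a b : ℕ) (hab : b ≤ a) :
    S1C ((rr F) ^ a) ((rr F) ^ b) =
      D F a / D F b * ((-1 : K F) ^ (a - b) / L F (a - b) ^ (rr F) ^ b) := by
  have hr2 : 2 ≤ rr F := Fintype.one_lt_card
  set p := ringChar F with hpdef
  haveI : CharP F p := ringChar.charP F
  have hp' : p.Prime := CharP.char_is_prime F p
  haveI : Fact p.Prime := ⟨hp'⟩
  haveI : CharP (K F) p :=
    charP_of_injective_algebraMap (algebraMap F (RatFunc F)).injective p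
  obtain ⟨s, -, hcard⟩ := FiniteField.card F p
  have hr : rr F = p ^ (s : ℕ) := hcard
  have hrb : rr F ^ b = p ^ ((s : ℕ) * b) := by rw [hr, ← pow_mul]
  have hra : rr F ^ a = p ^ ((s : ℕ) * a) := by rw [hr, ← pow_mul]
  have hdvd : p ^ ((s : ℕ) * b) ∣ p ^ ((s : ℕ) * a) :=
    pow_dvd_pow p (Nat.mul_le_mul le_rfl hab)
  have hq : p ^ ((s : ℕ) * a) / p ^ ((s : ℕ) * b) = rr F ^ (a - b) := by
    rw [Nat.pow_div (Nat.mul_le_mul le_rfl hab) hp'.pos, hr, ← pow_mul, Nat.mul_sub]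
  have hsign : ((-1 : K F) ^ (a - b)) ^ rr F ^ b = (-1 : K F) ^ (a - b) := by
    rw [← pow_mul, Nat.mul_comm, pow_mul, hrb, neg_one_pow_char_pow (K F) p]
  have hcoeff : PowerSeries.coeff (rr F ^ a) (logC F ^ rr F ^ b)
      = (-1 : K F) ^ (a - b) / L F (a - b) ^ rr F ^ b := by
    rw [hra, hrb, coeff_pow_char_pow' p (logC F) ((s : ℕ) * b) _ hdvd, hq, coeff_logC,
      div_pow, ← hrb, hsign]
  have h := hS1C (rr F ^ a) (rr F ^ b)
  rw [Cf_rpow, Cf_rpow, hcoeff] at h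
  have hDa := D_ne_zero F a
  have hkey : S1C (rr F ^ a) (rr F ^ b)
      = (-1 : K F) ^ (a - b) / L F (a - b) ^ rr F ^ b / D F b * D F a := by
    rw [← div_mul_cancel₀ (S1C (rr F ^ a) (rr F ^ b)) hDa, ← h]
  rw [hkey]
  ring
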